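/- arXiv:2605.17027 — 3 statements merged into one kernel-verified Lean document; each statement's English description precedes it below -/
import Mathlib

section
/- Let W ∈ R^{m×m} satisfy W·1 = Wᵀ·1 = 1 and ‖W − (1/m)·1·1ᵀ‖ = η < 1 (spectral norm). Let {x^t} ⊆ R^{m×d} be generated by x^{t+1} = W x^t + v^t from a consensus initialization (all rows of x^0 equal) with arbitrary perturbations satisfying ‖v^t_i‖ ≤ δ for each row i and each t ≥ 0. Let x̄^t := (1/m)·1ᵀ x^t denote the average row. Then for all t ≥ 0: (a) ‖x̄^{t+1} − x̄^t‖ ≤ δ, and (b) ‖x^t − 1·x̄^t‖_F ≤ (√(2m)/(1−η))·δ. -/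
open Finset

private lemma sqrt_sum_sq_add_le {ι : Type*} [Fintype ι] {E : Type*}
    [SeminormedAddCommGroup E] (f g : ι → E) :
    Real.sqrt (∑ i, ‖f i + g i‖ ^ 2) ≤
      Real.sqrt (∑ i, ‖f i‖ ^ 2) + Real.sqrt (∑ i, ‖g i‖ ^ 2) := by
  have h := norm_add_le ((WithLp.equiv 2 (ι → E)).symm f) ((WithLp.equiv 2 (ι → E)).symm g)
  rw [WithLp.equiv_symm_apply, ← WithLp.toLp_add] at h
  simpa [PiLp.norm_eq_of_L2] using h

set_option maxHeartbeats 1000000 in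
/-- Clipped consensus dynamics: if `W` is doubly stochastic with
`‖W − (1/m)·1·1ᵀ‖ = η < 1` (spectral norm), the rows of `x⁰` agree, the
iterates satisfy `x^{t+1} = W x^t + v^t` and every row of `v^t` has norm at
most `δ`, then the average row moves by at most `δ` per step and the
consensus error satisfies `‖x^t − 1·x̄^t‖_F ≤ (√(2m)/(1−η))·δ`. -/
theorem clipped_consensus_bound {m d : ℕ} (hm : 0 < m)
    (W : Matrix (Fin m) (Fin m) ℝ) (η δ : ℝ) (hη1 : η < 1) (hδ : 0 ≤ δ)
    (hrow : W.mulVec (fun _ => (1 : ℝ)) = fun _ => (1 : ℝ))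
    (hcol : Matrix.vecMul (fun _ => (1 : ℝ)) W = fun _ => (1 : ℝ))
    (hspec : ‖LinearMap.toContinuousLinearMap
        (Matrix.toEuclideanLin (W - Matrix.of fun _ _ => (1 : ℝ) / m))‖ = η)
    (x v : ℕ → Fin m → EuclideanSpace ℝ (Fin d))
    (hinit : ∀ i j, x 0 i = x 0 j)
    (hrec : ∀ t i, x (t + 1) i = (∑ j, W i j • x t j) + v t i)
    (hv : ∀ t i, ‖v t i‖ ≤ δ) :
    ∀ t,
      ‖(m : ℝ)⁻¹ • (∑ i, x (t + 1) i) - (m : ℝ)⁻¹ • (∑ i, x t i)‖ ≤ δ ∧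
      Real.sqrt (∑ i, ‖x t i - (m : ℝ)⁻¹ • (∑ j, x t j)‖ ^ 2) ≤
        Real.sqrt (2 * m) / (1 - η) * δ := by
  classical
  have hm0 : (m : ℝ) ≠ 0 := Nat.cast_ne_zero.mpr hm.ne'
  have hmpos : (0 : ℝ) < m := Nat.cast_pos.mpr hm
  set A : Matrix (Fin m) (Fin m) ℝ := W - Matrix.of fun _ _ => (1 : ℝ) / m with hAdef
  have hηnn : 0 ≤ η := hspec ▸ norm_nonneg _
  have h1η : (0 : ℝ) < 1 - η := by linarith
  have hrowsum : ∀ i, ∑ j, W i j = 1 := by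
    intro i
    have h := congrFun hrow i
    simpa [Matrix.mulVec, dotProduct] using h
  have hcolsum : ∀ j, ∑ i, W i j = 1 := by
    intro j
    have h := congrFun hcol j
    simpa [Matrix.vecMul, dotProduct] using h
  have hAsum : ∀ i, ∑ j, A i j = 0 := by
    intro i
    simp only [hAdef, Matrix.sub_apply, Matrix.of_apply, Finset.sum_sub_distrib, hrowsum]
    simp [Finset.sum_const, Finset.card_univ]
    field_simp
    norm_num
  -- spectral bound in coordinates
  have hAspec : ∀ u : Fin m → ℝ,
      ∑ i, (∑ j, A i j * u j) ^ 2 ≤ η ^ 2 * ∑ j, (u j) ^ 2 := by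
    intro u
    have h1 := (LinearMap.toContinuousLinearMap (Matrix.toEuclideanLin A)).le_opNorm
      ((WithLp.equiv 2 (Fin m → ℝ)).symm u)
    rw [hspec] at h1
    have h2 : (LinearMap.toContinuousLinearMap (Matrix.toEuclideanLin A))
        ((WithLp.equiv 2 (Fin m → ℝ)).symm u)
        = (WithLp.equiv 2 (Fin m → ℝ)).symm (A.mulVec u) := rfl
    rw [h2, EuclideanSpace.norm_eq, EuclideanSpace.norm_eq] at h1
    simp only [WithLp.equiv_symm_apply, PiLp.toLp_apply, Real.norm_eq_abs, sq_abs] at h1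
    have h3 := pow_le_pow_left₀ (Real.sqrt_nonneg _) h1 2
    rw [Real.sq_sqrt (by positivity), mul_pow, Real.sq_sqrt (by positivity)] at h3
    simpa [Matrix.mulVec, dotProduct] using h3
  have hnormsq : ∀ g : EuclideanSpace ℝ (Fin d), ‖g‖ ^ 2 = ∑ k, (g k) ^ 2 := by
    intro g
    rw [EuclideanSpace.norm_eq, Real.sq_sqrt (by positivity)]
    simp [sq_abs]
  have hspecF : ∀ f : Fin m → EuclideanSpace ℝ (Fin d),
      ∑ i, ‖∑ j, A i j • f j‖ ^ 2 ≤ η ^ 2 * ∑ j, ‖f j‖ ^ 2 := by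
    intro f
    calc ∑ i, ‖∑ j, A i j • f j‖ ^ 2
        = ∑ i, ∑ k, (∑ j, A i j * f j k) ^ 2 := by
          refine Finset.sum_congr rfl fun i _ => ?_
          rw [hnormsq]
          refine Finset.sum_congr rfl fun k _ => ?_
          have h : (∑ j, A i j • f j) k = ∑ j, A i j * f j k := by
            have h2 : (EuclideanSpace.projₗ (𝕜 := ℝ) k) (∑ j, A i j • f j)
                = ∑ j, (EuclideanSpace.projₗ (𝕜 := ℝ) k) (A i j • f j) :=
              map_sum (EuclideanSpace.projₗ (𝕜 := ℝ) k) _ Finset.univ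
            rw [show (EuclideanSpace.projₗ (𝕜 := ℝ) k) (∑ j, A i j • f j)
                = (∑ j, A i j • f j) k from rfl] at h2
            rw [h2]
            exact Finset.sum_congr rfl fun j _ => rfl
          rw [h]
      _ = ∑ k, ∑ i, (∑ j, A i j * f j k) ^ 2 := Finset.sum_comm
      _ ≤ ∑ k, η ^ 2 * ∑ j, (f j k) ^ 2 :=
          Finset.sum_le_sum fun k _ => hAspec fun j => f j k
      _ = η ^ 2 * ∑ j, ‖f j‖ ^ 2 := by
          simp_rw [hnormsq]
          rw [← Finset.mul_sum, Finset.sum_comm]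
  -- sum evolution
  have hsum_v : ∀ t, ∑ i, x (t + 1) i = (∑ j, x t j) + ∑ i, v t i := by
    intro t
    simp_rw [hrec, Finset.sum_add_distrib]
    congr 1
    rw [Finset.sum_comm]
    refine Finset.sum_congr rfl fun j _ => ?_
    rw [← Finset.sum_smul, hcolsum j, one_smul]
  -- part (a)
  have parta : ∀ t, ‖(m : ℝ)⁻¹ • (∑ i, x (t + 1) i) - (m : ℝ)⁻¹ • (∑ i, x t i)‖ ≤ δ := by
    intro t
    rw [hsum_v, smul_add, add_sub_cancel_left, norm_smul]
    have hs : ‖∑ i, v t i‖ ≤ m * δ := by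
      refine (norm_sum_le _ _).trans ?_
      calc ∑ i, ‖v t i‖ ≤ ∑ _i : Fin m, δ := Finset.sum_le_sum fun i _ => hv t i
        _ = m * δ := by simp [Finset.sum_const, Finset.card_univ, mul_comm]
    have hni : ‖(m : ℝ)⁻¹‖ = (m : ℝ)⁻¹ := by
      rw [Real.norm_eq_abs, abs_of_nonneg (by positivity)]
    rw [hni]
    calc (m : ℝ)⁻¹ * ‖∑ i, v t i‖ ≤ (m : ℝ)⁻¹ * (m * δ) := by
          exact mul_le_mul_of_nonneg_left hs (by positivity)
      _ = δ := by field_simp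
  -- key identity
  have hkey : ∀ t i, x (t + 1) i - (m : ℝ)⁻¹ • (∑ j, x (t + 1) j)
      = (∑ j, A i j • (x t j - (m : ℝ)⁻¹ • (∑ l, x t l)))
        + (v t i - (m : ℝ)⁻¹ • (∑ j, v t j)) := by
    intro t i
    have h1 : ∑ j, A i j • (x t j - (m : ℝ)⁻¹ • (∑ l, x t l))
        = (∑ j, W i j • x t j) - (m : ℝ)⁻¹ • (∑ l, x t l) := by
      simp only [smul_sub]
      rw [Finset.sum_sub_distrib, ← Finset.sum_smul, hAsum, zero_smul, sub_zero]
      have h2 : ∀ j, A i j • x t j = W i j • x t j - (m : ℝ)⁻¹ • x t j := by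
        intro j
        rw [hAdef]
        simp [Matrix.sub_apply, sub_smul, one_div]
      rw [Finset.sum_congr rfl fun j _ => h2 j, Finset.sum_sub_distrib, ← Finset.smul_sum]
    rw [h1, hrec, hsum_v, smul_add]
    abel
  -- consensus error bound by induction
  have hw : ∀ t, ∑ i, ‖v t i - (m : ℝ)⁻¹ • (∑ j, v t j)‖ ^ 2 ≤ m * δ ^ 2 := by
    intro t
    have hexp : ∀ i, ‖v t i - (m : ℝ)⁻¹ • (∑ j, v t j)‖ ^ 2
        = ‖v t i‖ ^ 2 - 2 * ((m : ℝ)⁻¹ * inner ℝ (v t i) (∑ j, v t j))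
          + (m : ℝ)⁻¹ ^ 2 * ‖∑ j, v t j‖ ^ 2 := by
      intro i
      rw [norm_sub_sq_real, real_inner_smul_right, norm_smul]
      rw [Real.norm_eq_abs, abs_of_nonneg (by positivity : (0:ℝ) ≤ (m:ℝ)⁻¹), mul_pow]
    calc ∑ i, ‖v t i - (m : ℝ)⁻¹ • (∑ j, v t j)‖ ^ 2
        = (∑ i, ‖v t i‖ ^ 2) - 2 * ((m : ℝ)⁻¹ * ‖∑ j, v t j‖ ^ 2)
          + m * ((m : ℝ)⁻¹ ^ 2 * ‖∑ j, v t j‖ ^ 2) := by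
          simp_rw [hexp]
          rw [Finset.sum_add_distrib, Finset.sum_sub_distrib, ← Finset.mul_sum,
            ← Finset.mul_sum, ← sum_inner, real_inner_self_eq_norm_sq]
          simp [Finset.sum_const, Finset.card_univ, mul_comm]
      _ = (∑ i, ‖v t i‖ ^ 2) - (m : ℝ)⁻¹ * ‖∑ j, v t j‖ ^ 2 := by
          field_simp
          ring
      _ ≤ ∑ i, ‖v t i‖ ^ 2 := by
          have : (0:ℝ) ≤ (m : ℝ)⁻¹ * ‖∑ j, v t j‖ ^ 2 := by positivity
          linarith
      _ ≤ ∑ _i : Fin m, δ ^ 2 := by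
          refine Finset.sum_le_sum fun i _ => ?_
          exact pow_le_pow_left₀ (norm_nonneg _) (hv t i) 2
      _ = m * δ ^ 2 := by simp [Finset.sum_const, Finset.card_univ, mul_comm]
  have hE : ∀ t, Real.sqrt (∑ i, ‖x t i - (m : ℝ)⁻¹ • (∑ j, x t j)‖ ^ 2)
      ≤ Real.sqrt m * δ / (1 - η) := by
    intro t
    induction t with
    | zero =>
      have hx0 : ∀ i : Fin m, x 0 i - (m : ℝ)⁻¹ • (∑ j, x 0 j) = 0 := by
        intro i
        have hs : (m : ℝ)⁻¹ • (∑ j, x 0 j) = x 0 i := by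
          rw [Finset.sum_congr rfl fun j _ => hinit j i, Finset.sum_const,
            Finset.card_univ, Fintype.card_fin, ← Nat.cast_smul_eq_nsmul ℝ,
            smul_smul, inv_mul_cancel₀ hm0, one_smul]
        rw [hs, sub_self]
      simp only [hx0, norm_zero, ne_eq, OfNat.ofNat_ne_zero, not_false_eq_true,
        zero_pow, Finset.sum_const_zero, Real.sqrt_zero]
      positivity
    | succ t ih =>
      have hstep : Real.sqrt (∑ i, ‖x (t + 1) i - (m : ℝ)⁻¹ • (∑ j, x (t + 1) j)‖ ^ 2)
          ≤ η * Real.sqrt (∑ i, ‖x t i - (m : ℝ)⁻¹ • (∑ j, x t j)‖ ^ 2)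
            + Real.sqrt m * δ := by
        have heq : ∑ i, ‖x (t + 1) i - (m : ℝ)⁻¹ • (∑ j, x (t + 1) j)‖ ^ 2
            = ∑ i, ‖(∑ j, A i j • (x t j - (m : ℝ)⁻¹ • (∑ l, x t l)))
                + (v t i - (m : ℝ)⁻¹ • (∑ j, v t j))‖ ^ 2 :=
          Finset.sum_congr rfl fun i _ => by rw [hkey t i]
        rw [heq]
        refine (sqrt_sum_sq_add_le _ _).trans (add_le_add ?_ ?_)
        · have h1 := Real.sqrt_le_sqrt
            (hspecF fun j => x t j - (m : ℝ)⁻¹ • (∑ l, x t l))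
          rw [Real.sqrt_mul (sq_nonneg η), Real.sqrt_sq hηnn] at h1
          exact h1
        · have h2 := Real.sqrt_le_sqrt (hw t)
          rwa [Real.sqrt_mul (le_of_lt hmpos), Real.sqrt_sq hδ] at h2
      have hmul : η * Real.sqrt (∑ i, ‖x t i - (m : ℝ)⁻¹ • (∑ j, x t j)‖ ^ 2)
          ≤ η * (Real.sqrt m * δ / (1 - η)) :=
        mul_le_mul_of_nonneg_left ih hηnn
      have halg : η * (Real.sqrt m * δ / (1 - η)) + Real.sqrt m * δ
          = Real.sqrt m * δ / (1 - η) := by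
        field_simp
        ring
      linarith
  intro t
  refine ⟨parta t, (hE t).trans ?_⟩
  have hsq : Real.sqrt m ≤ Real.sqrt (2 * m) := Real.sqrt_le_sqrt (by linarith)
  calc Real.sqrt m * δ / (1 - η) = Real.sqrt m / (1 - η) * δ := by ring
    _ ≤ Real.sqrt (2 * m) / (1 - η) * δ := by gcongr
end

section
/- Let β, δ, ε > 0 with ε < δ²/2, and let u be a random vector in R^d with E[‖T_β^δ(u)‖²] ≤ ε, where T_β^δ is the clipping operator. Let E be the event {T_β^δ(u) = u/β}. Then P(E) ≥ 1 − ε/δ², and E[‖u/β‖² | E] ≤ ε(1 + 2ε/δ²) ≤ ε + 2ε²/δ². -/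
open MeasureTheory

/-- The norm-based clipping operator `T_β^δ`. -/
noncomputable def clipOp {d : ℕ} (β δ : ℝ) (v : EuclideanSpace ℝ (Fin d)) :
    EuclideanSpace ℝ (Fin d) :=
  if ‖v‖ ≤ β * δ then β⁻¹ • v else (δ / ‖v‖) • v

/-- If `ε < δ²/2` and `E[‖T_β^δ(u)‖²] ≤ ε` for a random vector `u`, then the
event `E = {T_β^δ(u) = u/β}` has probability at least `1 − ε/δ²`, and the
conditional expectation of `‖u/β‖²` given `E` is at most `ε(1 + 2ε/δ²)`. -/
theorem clip_inactive_high_probability {d : ℕ} {Ω : Type*} [MeasurableSpace Ω]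
    (μ : Measure Ω) [IsProbabilityMeasure μ]
    (β δ ε : ℝ) (hβ : 0 < β) (hδ : 0 < δ) (hε : 0 < ε) (hεδ : ε < δ ^ 2 / 2)
    (u : Ω → EuclideanSpace ℝ (Fin d)) (hu : Measurable u)
    (hint : Integrable (fun ω => ‖clipOp β δ (u ω)‖ ^ 2) μ)
    (hbound : ∫ ω, ‖clipOp β δ (u ω)‖ ^ 2 ∂μ ≤ ε) :
    1 - ε / δ ^ 2 ≤ (μ {ω | clipOp β δ (u ω) = β⁻¹ • u ω}).toReal ∧
    (∫ ω in {ω | clipOp β δ (u ω) = β⁻¹ • u ω}, ‖β⁻¹ • u ω‖ ^ 2 ∂μ) /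
        (μ {ω | clipOp β δ (u ω) = β⁻¹ • u ω}).toReal ≤ ε * (1 + 2 * ε / δ ^ 2) := by
  have hδ2 : (0:ℝ) < δ ^ 2 := by positivity
  set S := {ω | clipOp β δ (u ω) = β⁻¹ • u ω} with hSdef
  have hS_eq : S = {ω | ‖u ω‖ ≤ β * δ} := by
    ext ω
    simp only [hSdef, Set.mem_setOf_eq]
    constructor
    · intro h
      by_contra hn
      push_neg at hn
      have hne : u ω ≠ 0 := by
        intro h0
        rw [h0, norm_zero] at hn
        nlinarith
      have h' : (δ / ‖u ω‖) • u ω = β⁻¹ • u ω := by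
        rwa [clipOp, if_neg (not_le.mpr hn)] at h
      have : (δ / ‖u ω‖ - β⁻¹) • u ω = 0 := by
        rw [sub_smul, h', sub_self]
      rcases smul_eq_zero.mp this with hc | hc
      · have hβδ : δ / ‖u ω‖ = β⁻¹ := by linarith [sub_eq_zero.mp hc]
        have hn0 : ‖u ω‖ ≠ 0 := norm_ne_zero_iff.mpr hne
        field_simp at hβδ
        nlinarith
      · exact hne hc
    · intro h
      rw [clipOp, if_pos h]
  have hSm : MeasurableSet S := by
    rw [hS_eq]
    exact measurableSet_le hu.norm measurable_const
  have hcompl : ∀ ω ∈ Sᶜ, ‖clipOp β δ (u ω)‖ ^ 2 = δ ^ 2 := by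
    intro ω hω
    rw [hS_eq] at hω
    have hn : ¬ ‖u ω‖ ≤ β * δ := hω
    push_neg at hn
    have hn0 : ‖u ω‖ ≠ 0 := (lt_of_le_of_lt (by positivity : (0:ℝ) ≤ β * δ) hn).ne'
    rw [clipOp, if_neg (not_le.mpr hn), norm_smul, Real.norm_eq_abs,
      abs_of_nonneg (div_nonneg hδ.le (norm_nonneg _)), div_mul_cancel₀ _ hn0]
  have hsplit : (∫ ω in S, ‖clipOp β δ (u ω)‖ ^ 2 ∂μ)
      + (∫ ω in Sᶜ, ‖clipOp β δ (u ω)‖ ^ 2 ∂μ)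
      = ∫ ω, ‖clipOp β δ (u ω)‖ ^ 2 ∂μ :=
    integral_add_compl hSm hint
  have hcomplInt : (∫ ω in Sᶜ, ‖clipOp β δ (u ω)‖ ^ 2 ∂μ)
      = δ ^ 2 * (μ Sᶜ).toReal := by
    rw [setIntegral_congr_fun hSm.compl hcompl, setIntegral_const, smul_eq_mul, mul_comm]; rfl
  have hSnonneg : 0 ≤ ∫ ω in S, ‖clipOp β δ (u ω)‖ ^ 2 ∂μ :=
    setIntegral_nonneg hSm (fun ω _ => by positivity)
  have hpbound : (μ Sᶜ).toReal ≤ ε / δ ^ 2 := by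
    rw [le_div_iff₀ hδ2]
    nlinarith [hsplit, hcomplInt, hbound, hSnonneg]
  have hsum : (μ S).toReal + (μ Sᶜ).toReal = 1 := by
    rw [← ENNReal.toReal_add (measure_ne_top μ S) (measure_ne_top μ Sᶜ),
      measure_add_measure_compl hSm, measure_univ, ENNReal.toReal_one]
  have hfirst : 1 - ε / δ ^ 2 ≤ (μ S).toReal := by linarith
  refine ⟨hfirst, ?_⟩
  have hIεpre : (∫ ω in S, ‖clipOp β δ (u ω)‖ ^ 2 ∂μ) ≤ ε := by
    nlinarith [hsplit, hcomplInt, hbound, ENNReal.toReal_nonneg (a := μ Sᶜ)]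
  have hIeq : (∫ ω in S, ‖β⁻¹ • u ω‖ ^ 2 ∂μ)
      = ∫ ω in S, ‖clipOp β δ (u ω)‖ ^ 2 ∂μ := by
    refine setIntegral_congr_fun hSm (fun ω hω => ?_)
    rw [hω]
  have hx : ε / δ ^ 2 < 1 / 2 := by rw [div_lt_iff₀ hδ2]; linarith
  have hx0 : 0 < ε / δ ^ 2 := by positivity
  have hm : 0 < (μ S).toReal := by linarith
  have h2 : 2 * ε / δ ^ 2 = 2 * (ε / δ ^ 2) := by ring
  rw [hIeq, div_le_iff₀ hm, h2]
  nlinarith [hIεpre, hfirst, hx, hx0, hε,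
    mul_le_mul_of_nonneg_left hfirst (by positivity : (0:ℝ) ≤ ε * (1 + 2 * (ε / δ ^ 2))),
    mul_nonneg hε.le (mul_nonneg hx0.le (by linarith : (0:ℝ) ≤ 1 - 2 * (ε / δ ^ 2)))]
end

section
/- Let f : R^d → R be twice continuously differentiable and satisfy the α-generalized smoothness condition ‖∇²f(x)‖ ≤ L₀ + L₁‖∇f(x)‖^α for some L₀, L₁ > 0 and α ∈ (0,1). Then for any reference point x̄ and all x ∈ R^d, ‖∇f(x)‖ ≤ ( [‖∇f(x̄)‖ + L₀‖x − x̄‖]^{1−α} + (1−α)L₁‖x − x̄‖ )^{1/(1−α)}. -/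
open Set Filter Real Topology

set_option maxHeartbeats 1000000 in
/-- Gradient growth under `α`-generalized smoothness: if
`‖∇²f(x)‖ ≤ L₀ + L₁‖∇f(x)‖^α` with `α ∈ (0,1)`, then for any reference point
`xbar` and all `x`,
`‖∇f(x)‖ ≤ ([‖∇f(xbar)‖ + L₀‖x−xbar‖]^{1−α} + (1−α)L₁‖x−xbar‖)^{1/(1−α)}`. -/
theorem gradient_growth_generalized_smooth {d : ℕ}
    (f : EuclideanSpace ℝ (Fin d) → ℝ) (hf : ContDiff ℝ 2 f)
    (L₀ L₁ α : ℝ) (hL₀ : 0 < L₀) (hL₁ : 0 < L₁) (hα0 : 0 < α) (hα1 : α < 1)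
    (hH : ∀ x, ‖fderiv ℝ (fun y => gradient f y) x‖ ≤ L₀ + L₁ * ‖gradient f x‖ ^ α) :
    ∀ xbar x : EuclideanSpace ℝ (Fin d),
      ‖gradient f x‖ ≤
        ((‖gradient f xbar‖ + L₀ * ‖x - xbar‖) ^ (1 - α) +
          (1 - α) * L₁ * ‖x - xbar‖) ^ (1 / (1 - α)) := by
  intro xbar x
  set β : ℝ := 1 - α with hβdef
  have hβ : 0 < β := by rw [hβdef]; linarith
  have hβne : β ≠ 0 := hβ.ne'
  set g0 : ℝ := ‖gradient f xbar‖ with hg0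
  have hg0nn : 0 ≤ g0 := norm_nonneg _
  set r : ℝ := ‖x - xbar‖ with hr
  have hrnn : 0 ≤ r := norm_nonneg _
  rcases eq_or_lt_of_le hrnn with hr0 | hrpos
  · -- x = xbar
    have hx : x = xbar := norm_sub_eq_zero_iff.mp hr0.symm
    subst hx
    rw [← hr0]
    simp only [mul_zero, add_zero]
    have : (g0 ^ β) ^ (1 / β) = g0 := by
      rw [← Real.rpow_mul hg0nn, mul_one_div, div_self hβne, Real.rpow_one]
    rw [this]
  · -- main case: r > 0
    -- C¹ smoothness of the gradient
    have hG : ContDiff ℝ 1 (fun y => gradient f y) := by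
      have h1 : ContDiff ℝ 1 (fderiv ℝ f) := hf.fderiv_right (by norm_num)
      exact ((InnerProductSpace.toDual ℝ
        (EuclideanSpace ℝ (Fin d))).symm.contDiff).comp h1
    set G : EuclideanSpace ℝ (Fin d) → EuclideanSpace ℝ (Fin d) :=
      fun y => gradient f y with hGdef
    -- the path and its composition with the gradient
    set c : ℝ → EuclideanSpace ℝ (Fin d) := fun t => xbar + t • (x - xbar) with hc
    set F : ℝ → EuclideanSpace ℝ (Fin d) := fun t => G (c t) with hF
    set F' : ℝ → EuclideanSpace ℝ (Fin d) :=
      fun t => (fderiv ℝ G (c t)) (x - xbar) with hF'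
    have hcderiv : ∀ t : ℝ, HasDerivAt c (x - xbar) t := by
      intro t
      have := ((hasDerivAt_id t).smul_const (x - xbar)).const_add xbar
      rw [one_smul] at this
      exact this
    have hFderiv : ∀ t : ℝ, HasDerivAt F (F' t) t := by
      intro t
      exact ((hG.differentiable one_ne_zero) (c t)).hasFDerivAt.comp_hasDerivAt t (hcderiv t)
    have hFbound : ∀ t : ℝ, ‖F' t‖ ≤ (L₀ + L₁ * ‖F t‖ ^ α) * r := by
      intro t
      calc ‖F' t‖ ≤ ‖fderiv ℝ G (c t)‖ * ‖x - xbar‖ :=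
            (fderiv ℝ G (c t)).le_opNorm _
        _ ≤ (L₀ + L₁ * ‖F t‖ ^ α) * r := by
            apply mul_le_mul_of_nonneg_right _ (norm_nonneg _)
            exact hH (c t)
    -- key estimate for each ε > 0
    have key : ∀ ε : ℝ, 0 < ε →
        ‖gradient f x‖ ≤ ((g0 + ε + L₀ * r) ^ β + β * L₁ * r) ^ (1 / β) := by
      intro ε hε
      set A : ℝ := g0 + ε with hA
      have hApos : 0 < A := by positivity
      set b : ℝ := L₀ * r with hb
      have hbpos : 0 < b := by positivity
      set cc : ℝ := β * L₁ * r with hcc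
      have hccpos : 0 < cc := by positivity
      set u : ℝ → ℝ := fun t => (A + b * t) ^ β + cc * t with hu
      set B : ℝ → ℝ := fun t => (u t) ^ (1 / β) with hB
      set B' : ℝ → ℝ := fun t =>
        1 / β * (u t) ^ (1 / β - 1) * (β * (A + b * t) ^ (β - 1) * b + cc) with hB'
      have hbase : ∀ t : ℝ, 0 ≤ t → 0 < A + b * t := by
        intro t ht; positivity
      have hupos : ∀ t : ℝ, 0 ≤ t → 0 < u t := by
        intro t ht
        have h1 : 0 < (A + b * t) ^ β := Real.rpow_pos_of_pos (hbase t ht) β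
        have h2 : 0 ≤ cc * t := by positivity
        simp only [hu]
        linarith
      have hBderiv : ∀ t ∈ Ico (0:ℝ) 1, HasDerivWithinAt B (B' t) (Ici t) t := by
        intro t ht
        have h1 : HasDerivAt (fun s : ℝ => A + b * s) b t := by
          simpa using ((hasDerivAt_id t).const_mul b).const_add A
        have h2 : HasDerivAt (fun s : ℝ => (A + b * s) ^ β)
            (β * (A + b * t) ^ (β - 1) * b) t :=
          by
            have h := Real.hasDerivAt_rpow_const (p := β) (Or.inl (hbase t ht.1).ne')
            exact h.comp t h1
        have h3 : HasDerivAt u ((β * (A + b * t) ^ (β - 1) * b) + cc) t := by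
          have hlin : HasDerivAt (fun s : ℝ => cc * s) cc t := by
            simpa using (hasDerivAt_id t).const_mul cc
          exact h2.add hlin
        have h4 := (Real.hasDerivAt_rpow_const (p := 1 / β)
            (Or.inl (hupos t ht.1).ne')).comp t h3
        exact h4.hasDerivWithinAt
      have hBcont : ContinuousOn B (Icc (0:ℝ) 1) := by
        intro t ht
        have h1 : ContinuousWithinAt (fun s : ℝ => A + b * s) (Icc (0:ℝ) 1) t :=
          Continuous.continuousWithinAt (by fun_prop)
        have h2 : ContinuousWithinAt (fun s : ℝ => (A + b * s) ^ β) (Icc (0:ℝ) 1) t :=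
          h1.rpow_const (Or.inl (hbase t ht.1).ne')
        have h3 : ContinuousWithinAt u (Icc (0:ℝ) 1) t := by
          exact h2.add (Continuous.continuousWithinAt (by fun_prop))
        exact h3.rpow_const (Or.inl (hupos t ht.1).ne')
      have hBA : ∀ t : ℝ, t = 0 → B t = A := by
        intro t ht
        simp only [hB, hu, ht, mul_zero, add_zero]
        rw [← Real.rpow_mul hApos.le, mul_one_div, div_self hβne, Real.rpow_one]
      have hFa : ‖F 0‖ ≤ B 0 := by
        have hF0 : F 0 = gradient f xbar := by simp [hF, hGdef, hc]
        rw [hF0, hBA 0 rfl, ← hg0, hA]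
        linarith
      have hbound : ∀ t ∈ Ico (0:ℝ) 1, ‖F t‖ = B t → ‖F' t‖ < B' t := by
        intro t ht heq
        rcases eq_or_lt_of_le ht.1 with ht0 | htpos
        · -- t = 0 : contradiction since ‖F 0‖ = g0 < A = B 0
          exfalso
          have hF0 : F t = gradient f xbar := by simp [hF, hGdef, hc, ← ht0]
          rw [hF0, hBA t ht0.symm, ← hg0] at heq
          have : g0 < A := by rw [hA]; linarith
          linarith
        · -- t > 0
          have hupt := hupos t ht.1
          have hbt := hbase t ht.1
          have hexp1 : (1:ℝ) / β - 1 = α / β := by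
            field_simp
            rw [hβdef]; ring
          have hexp2 : β - 1 = -α := by rw [hβdef]; ring
          have hBα : (B t) ^ α = (u t) ^ (α / β) := by
            simp only [hB]
            rw [← Real.rpow_mul hupt.le]
            congr 1
            ring
          have hstrict : (A + b * t) ^ α < (u t) ^ (α / β) := by
            have hlt : (A + b * t) ^ β < u t := by
              have hcct : 0 < cc * t := by positivity
              simp only [hu]; linarith
            have h5 := Real.rpow_lt_rpow (Real.rpow_pos_of_pos hbt β).le hlt
              (by positivity : (0:ℝ) < α / β)
            have hexp : β * (α / β) = α := by field_simp
            rwa [← Real.rpow_mul hbt.le, hexp] at h5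
          have hchain : (L₀ + L₁ * ‖F t‖ ^ α) * r < B' t := by
            rw [heq, hBα]
            have hB'eq : B' t = (u t) ^ (α / β) * (A + b * t) ^ (-α) * b
                + L₁ * r * (u t) ^ (α / β) := by
              simp only [hB', hexp1, hexp2, hcc]
              field_simp
            rw [hB'eq]
            have h1 : L₀ * r < (u t) ^ (α / β) * (A + b * t) ^ (-α) * b := by
              have hpow : (1:ℝ) < (u t) ^ (α / β) * (A + b * t) ^ (-α) := by
                rw [Real.rpow_neg hbt.le, ← div_eq_mul_inv, lt_div_iff₀
                  (Real.rpow_pos_of_pos hbt α), one_mul]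
                exact hstrict
              calc L₀ * r = b := rfl
                _ = 1 * b := (one_mul b).symm
                _ < (u t) ^ (α / β) * (A + b * t) ^ (-α) * b :=
                    mul_lt_mul_of_pos_right hpow hbpos
            have h2 : (L₀ + L₁ * (u t) ^ (α / β)) * r
                = L₀ * r + L₁ * r * (u t) ^ (α / β) := by ring
            rw [h2]
            linarith
          calc ‖F' t‖ ≤ (L₀ + L₁ * ‖F t‖ ^ α) * r := hFbound t
            _ < B' t := hchain
      have hFcont : ContinuousOn F (Icc (0:ℝ) 1) :=
        fun t _ => ((hFderiv t).continuousAt).continuousWithinAt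
      have hmain := image_norm_le_of_norm_deriv_right_lt_deriv_boundary' hFcont
        (fun t _ => (hFderiv t).hasDerivWithinAt) hFa hBcont hBderiv hbound
        (right_mem_Icc.2 zero_le_one)
      have hF1 : F 1 = gradient f x := by simp [hF, hGdef, hc]
      have hB1 : B 1 = ((g0 + ε + L₀ * r) ^ β + β * L₁ * r) ^ (1 / β) := by
        simp [hB, hu, hA, hb, hcc]
      rw [hF1, hB1] at hmain
      exact hmain
    -- pass to the limit ε → 0⁺
    have hbase0 : 0 < g0 + L₀ * r := by positivity
    have hcont : Tendsto (fun ε : ℝ => ((g0 + ε + L₀ * r) ^ β + β * L₁ * r) ^ (1 / β))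
        (𝓝[>] (0:ℝ)) (𝓝 (((g0 + L₀ * r) ^ β + β * L₁ * r) ^ (1 / β))) := by
      have h0 : ContinuousAt
          (fun ε : ℝ => ((g0 + ε + L₀ * r) ^ β + β * L₁ * r) ^ (1 / β)) 0 := by
        have h1 : ContinuousAt (fun ε : ℝ => g0 + ε + L₀ * r) 0 := by fun_prop
        have h2 : ContinuousAt (fun ε : ℝ => (g0 + ε + L₀ * r) ^ β) 0 := by
          apply ContinuousAt.rpow_const h1
          simp only [add_zero]
          exact Or.inl hbase0.ne'
        have h3 : ContinuousAt (fun ε : ℝ => (g0 + ε + L₀ * r) ^ β + β * L₁ * r) 0 :=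
          h2.add continuousAt_const
        apply ContinuousAt.rpow_const h3
        left
        have h4 : 0 < (g0 + (0:ℝ) + L₀ * r) ^ β + β * L₁ * r := by
          have := Real.rpow_pos_of_pos (by positivity : (0:ℝ) < g0 + 0 + L₀ * r) β
          have h5 : 0 ≤ β * L₁ * r := by positivity
          linarith
        simpa using h4.ne'
      have := h0.continuousWithinAt (s := Ioi (0:ℝ))
      simpa using this.tendsto
    refine ge_of_tendsto hcont ?_
    exact eventually_nhdsWithin_of_forall (fun ε hε => key ε hε)
end
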